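/- In a CAT(0) product Y = T × ℝ with T the 4-valent tree (a joint block), if γ and γ' are two vertical lines and γ_0 is any joint line lying between them (i.e., every geodesic from γ to γ' meets γ_0), then γ_0 is parallel to both γ and γ': the convex hull of γ_0 ∪ γ is a flat strip. -/
import Mathlib


/-- A unit-speed geodesic line `ℝ → X`. -/
def IsGeodesicLine {X : Type*} [MetricSpace X] (γ : ℝ → X) : Prop :=
  ∀ s t : ℝ, dist (γ s) (γ t) = |s - t|

/-- Two geodesic lines are *parallel* when their convex hull is a flat strip:
there is an isometrically embedded Euclidean strip `ℝ × [0, d]` whose two boundary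
lines are the two given lines (up to orientation and translation of parameter). -/
def ParallelLines {X : Type*} [MetricSpace X] (γ γ' : ℝ → X) : Prop :=
  ∃ (d : ℝ) (f : ℝ → ℝ → X), 0 ≤ d ∧
    (∀ s t u v : ℝ, u ∈ Set.Icc (0 : ℝ) d → v ∈ Set.Icc (0 : ℝ) d →
      dist (f s u) (f t v) = Real.sqrt ((s - t) ^ 2 + (u - v) ^ 2)) ∧
    (∀ t, f t 0 = γ t) ∧
    (∃ c : ℝ, (∀ t, f t d = γ' (t + c)) ∨ (∀ t, f t d = γ' (c - t)))

/-- Pure real-number lemma: if a family of points `(s, u s)` in the plane embeds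
isometrically into `ℝ` (via `t`), then the points are collinear. -/
lemma affine_aux (t u : ℝ → ℝ)
    (h : ∀ a b : ℝ, (t a - t b) ^ 2 = (a - b) ^ 2 + (u a - u b) ^ 2) :
    ∀ a b c : ℝ, (u c - u b) * (b - a) = (u b - u a) * (c - b) := by
  intro a b c
  have e1 := h b a
  have e2 := h c b
  have e3 := h c a
  have hXY : (t b - t a) * (t c - t b)
      = (b - a) * (c - b) + (u b - u a) * (u c - u b) := by
    linear_combination (e3 - e1 - e2) / 2
  have hz : ((u c - u b) * (b - a) - (u b - u a) * (c - b)) ^ 2 = 0 := by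
    nlinarith [e1, e2, hXY, sq_nonneg ((t b - t a) * (t c - t b))]
  have := pow_eq_zero_iff (n := 2) (by norm_num) |>.mp hz
  linarith

/-- The Joint Line Lemma.  In the CAT(0) space (e.g. the joint block `Γ⁴ × ℝ`), let
`γ` and `γ'` be parallel geodesic (joint) lines, and let `γ₀` be a joint line lying
*between* them: every geodesic segment from a point of `γ` to a point of `γ'` meets
`γ₀`.  Then `γ₀` is parallel to both `γ` and `γ'`. -/
theorem stmt13 {X : Type*} [MetricSpace X]
    (γ γ' γ₀ : ℝ → X)
    (hγ : IsGeodesicLine γ) (hγ' : IsGeodesicLine γ') (hγ₀ : IsGeodesicLine γ₀)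
    (hpar : ParallelLines γ γ')
    (hbetween : ∀ s t : ℝ, ∀ σ : ℝ → X,
      σ 0 = γ s → σ (dist (γ s) (γ' t)) = γ' t →
      (∀ u v : ℝ, u ∈ Set.Icc 0 (dist (γ s) (γ' t)) → v ∈ Set.Icc 0 (dist (γ s) (γ' t)) →
        dist (σ u) (σ v) = |u - v|) →
      ∃ u ∈ Set.Icc 0 (dist (γ s) (γ' t)), σ u ∈ Set.range γ₀) :
    ParallelLines γ₀ γ ∧ ParallelLines γ₀ γ' := by
  obtain ⟨d, f, hd, hf, hf0, c, hc⟩ := hpar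
  -- For each s, the vertical segment `u ↦ f s u` meets γ₀.
  have hmain : ∀ s : ℝ, ∃ u, u ∈ Set.Icc (0:ℝ) d ∧ ∃ τ, γ₀ τ = f s u := by
    intro s
    obtain ⟨t', ht'⟩ : ∃ t', f s d = γ' t' := by
      rcases hc with h | h
      · exact ⟨s + c, h s⟩
      · exact ⟨c - s, h s⟩
    have hdist : dist (γ s) (γ' t') = d := by
      rw [← hf0 s, ← ht', hf s s 0 d ⟨le_refl 0, hd⟩ ⟨hd, le_refl d⟩]
      have : (s - s) ^ 2 + ((0:ℝ) - d) ^ 2 = d ^ 2 := by ring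
      rw [this, Real.sqrt_sq hd]
    have hgeo : ∀ u v : ℝ, u ∈ Set.Icc 0 (dist (γ s) (γ' t')) →
        v ∈ Set.Icc 0 (dist (γ s) (γ' t')) →
        dist (f s u) (f s v) = |u - v| := by
      intro u v hu hv
      rw [hdist] at hu hv
      rw [hf s s u v hu hv]
      have : (s - s) ^ 2 + (u - v) ^ 2 = (u - v) ^ 2 := by ring
      rw [this, Real.sqrt_sq_eq_abs]
    obtain ⟨u, hu, hmem⟩ := hbetween s t' (f s) (hf0 s) (by rw [hdist, ht']) hgeo
    rw [hdist] at hu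
    obtain ⟨τ, hτ⟩ := hmem
    exact ⟨u, hu, τ, hτ⟩
  choose u hu τ hτ using hmain
  -- The key metric relation.
  have hrel : ∀ a b : ℝ, (τ a - τ b) ^ 2 = (a - b) ^ 2 + (u a - u b) ^ 2 := by
    intro a b
    have h1 : dist (γ₀ (τ a)) (γ₀ (τ b)) = |τ a - τ b| := hγ₀ _ _
    rw [hτ a, hτ b, hf a b (u a) (u b) (hu a) (hu b)] at h1
    have h2 : (0:ℝ) ≤ (a - b) ^ 2 + (u a - u b) ^ 2 := by positivity
    have h3 : (a - b) ^ 2 + (u a - u b) ^ 2 = |τ a - τ b| ^ 2 := by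
      rw [← h1, Real.sq_sqrt h2]
    rw [← sq_abs]
    exact h3.symm
  -- `u` is affine, bounded, hence constant.
  have haff := affine_aux τ u hrel
  have hlin : ∀ s : ℝ, u s = u 0 + s * (u 1 - u 0) := by
    intro s
    have h := haff 0 1 s
    linear_combination h
  have hk : u 1 - u 0 = 0 := by
    by_contra hk
    have h1 := hlin ((2 * d + 1) / (u 1 - u 0))
    rw [div_mul_cancel₀ _ hk] at h1
    have h2 := (hu ((2 * d + 1) / (u 1 - u 0))).2
    have h3 := (hu 0).1
    linarith
  have hconst : ∀ s : ℝ, u s = u 0 := by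
    intro s; rw [hlin s, hk]; ring
  set b : ℝ := u 0 with hb
  have hb0 : 0 ≤ b := (hu 0).1
  have hbd : b ≤ d := (hu 0).2
  have hτrel : ∀ a c' : ℝ, (τ a - τ c') ^ 2 = (a - c') ^ 2 := by
    intro a c'
    have := hrel a c'
    rw [hconst a, hconst c'] at this
    simpa using this
  set ε : ℝ := τ 1 - τ 0 with hεdef
  have hε : ε ^ 2 = 1 := by
    have := hτrel 1 0
    simpa using this
  have hτs : ∀ s : ℝ, τ s = τ 0 + ε * s := by
    intro s
    have h1 := hτrel s 0
    have h2 := hτrel s 1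
    have h3 : ε * (τ s - τ 0) = s := by linear_combination (h1 - h2) / 2 + hε / 2
    linear_combination ε * h3 - (τ s - τ 0) * hε
  have hkey : ∀ s : ℝ, γ₀ (τ 0 + ε * s) = f s b := by
    intro s
    rw [← hτs s, hτ s, hconst s]
  have hγ₀eq : ∀ x : ℝ, γ₀ x = f (ε * (x - τ 0)) b := by
    intro x
    have h := hkey (ε * (x - τ 0))
    have hx : τ 0 + ε * (ε * (x - τ 0)) = x := by linear_combination (x - τ 0) * hε
    rw [hx] at h
    exact h
  have hεcases : ε = 1 ∨ ε = -1 := by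
    rcases mul_self_eq_one_iff.mp (by nlinarith [hε] : ε * ε = 1) with h | h
    · exact Or.inl h
    · exact Or.inr h
  constructor
  · -- γ₀ parallel to γ
    refine ⟨b, fun s w => f (ε * (s - τ 0)) (b - w), hb0, ?_, ?_, ?_⟩
    · intro s t w v hw hv
      have hw' : b - w ∈ Set.Icc (0:ℝ) d := ⟨by linarith [hw.2], by linarith [hw.1]⟩
      have hv' : b - v ∈ Set.Icc (0:ℝ) d := ⟨by linarith [hv.2], by linarith [hv.1]⟩
      rw [hf _ _ _ _ hw' hv']
      congr 1
      linear_combination (s - t) ^ 2 * hε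
    · intro t
      simp only [sub_zero]
      exact (hγ₀eq t).symm
    · rcases hεcases with h | h
      · refine ⟨-τ 0, Or.inl fun t => ?_⟩
        show f (ε * (t - τ 0)) (b - b) = γ (t + -τ 0)
        rw [sub_self, hf0, h]
        congr 1
        ring
      · refine ⟨τ 0, Or.inr fun t => ?_⟩
        show f (ε * (t - τ 0)) (b - b) = γ (τ 0 - t)
        rw [sub_self, hf0, h]
        congr 1
        ring
  · -- γ₀ parallel to γ'
    refine ⟨d - b, fun s w => f (ε * (s - τ 0)) (b + w), by linarith, ?_, ?_, ?_⟩
    · intro s t w v hw hv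
      have hw' : b + w ∈ Set.Icc (0:ℝ) d := ⟨by linarith [hw.1], by linarith [hw.2]⟩
      have hv' : b + v ∈ Set.Icc (0:ℝ) d := ⟨by linarith [hv.1], by linarith [hv.2]⟩
      rw [hf _ _ _ _ hw' hv']
      congr 1
      linear_combination (s - t) ^ 2 * hε
    · intro t
      simp only [add_zero]
      exact (hγ₀eq t).symm
    · have hbd' : b + (d - b) = d := by ring
      rcases hc with hC | hC
      · rcases hεcases with h | h
        · refine ⟨c - τ 0, Or.inl fun t => ?_⟩
          show f (ε * (t - τ 0)) (b + (d - b)) = γ' (t + (c - τ 0))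
          rw [hbd', hC, h]
          congr 1
          ring
        · refine ⟨c + τ 0, Or.inr fun t => ?_⟩
          show f (ε * (t - τ 0)) (b + (d - b)) = γ' (c + τ 0 - t)
          rw [hbd', hC, h]
          congr 1
          ring
      · rcases hεcases with h | h
        · refine ⟨c + τ 0, Or.inr fun t => ?_⟩
          show f (ε * (t - τ 0)) (b + (d - b)) = γ' (c + τ 0 - t)
          rw [hbd', hC, h]
          congr 1
          ring
        · refine ⟨c - τ 0, Or.inl fun t => ?_⟩
          show f (ε * (t - τ 0)) (b + (d - b)) = γ' (t + (c - τ 0))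
          rw [hbd', hC, h]
          congr 1
          ring
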